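/- Let m ≥ 2 and let δ > 0 and J ≥ 1. Assume that for every j with 1 ≤ j ≤ J one has λ_1 γ_1² ≤ 4 C_2^{2j} δ · Σ_{i=2}^m λ_i γ_i². Then for every j with 1 ≤ j ≤ J, E_j ≤ 4 (1 + δ) C_2^{2j} · Σ_{i=1}^m λ_i γ_i². (Paper's Theorem 1: if the first eigencomponent of the initial CG error is small relative to the others, CG convergence in the first J iterations is governed by the reduced condition number κ_2 = λ_m/λ_2 rather than by κ_1 = λ_m/λ_1.) -/

import Mathlib

open Polynomial Real

set_option maxHeartbeats 4000000

lemma chebyT_natDegree_le : ∀ j : ℕ, (Polynomial.Chebyshev.T ℝ (j : ℤ)).natDegree ≤ j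
  | 0 => by simp [Polynomial.Chebyshev.T_zero]
  | 1 => by simp [Polynomial.Chebyshev.T_one]
  | (j + 2) => by
    have h1 := chebyT_natDegree_le (j + 1)
    have h0 := chebyT_natDegree_le j
    rw [show ((j + 2 : ℕ) : ℤ) = (j : ℤ) + 2 by push_cast; ring,
      Polynomial.Chebyshev.T_add_two]
    refine le_trans (Polynomial.natDegree_sub_le _ _) (max_le ?_ (by omega))
    refine le_trans (Polynomial.natDegree_mul_le) ?_
    have : ((2 : ℝ[X]) * X).natDegree ≤ 1 := by compute_degree
    push_cast at h1
    omega

lemma chebyT_cosh (j : ℕ) (t : ℝ) :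
    (Polynomial.Chebyshev.T ℝ (j : ℤ)).eval (Real.cosh t) = Real.cosh (j * t) := by
  have h := Polynomial.Chebyshev.T_complex_cos ((t : ℂ) * Complex.I) (j : ℤ)
  rw [Complex.cos_mul_I] at h
  have h2 : ((j : ℤ) : ℂ) * ((t : ℂ) * Complex.I) = ((j * t : ℝ) : ℂ) * Complex.I := by
    push_cast; ring
  rw [h2, Complex.cos_mul_I] at h
  have := Polynomial.Chebyshev.complex_ofReal_eval_T (Real.cosh t) (j : ℤ)
  rw [Complex.ofReal_cosh] at this
  rw [h] at this
  rw [← Complex.ofReal_cosh] at this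
  exact_mod_cast this

lemma chebyT_abs_le (j : ℕ) (x : ℝ) (h1 : -1 ≤ x) (h2 : x ≤ 1) :
    |(Polynomial.Chebyshev.T ℝ (j : ℤ)).eval x| ≤ 1 := by
  have hx : x = Real.cos (Real.arccos x) := (Real.cos_arccos h1 h2).symm
  rw [hx, Polynomial.Chebyshev.T_real_cos]
  exact Real.abs_cos_le_one _

lemma exists_cosh_eq (x : ℝ) (hx : 1 ≤ x) : ∃ r : ℝ, 0 ≤ r ∧ Real.cosh r = x := by
  set s := Real.sqrt (x ^ 2 - 1) with hs
  have hs0 : 0 ≤ s := Real.sqrt_nonneg _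
  have hssq : s ^ 2 = x ^ 2 - 1 := Real.sq_sqrt (by nlinarith)
  have hpos : 0 < x + s := by nlinarith
  refine ⟨Real.log (x + s), Real.log_nonneg (by nlinarith), ?_⟩
  rw [Real.cosh_eq, Real.exp_neg, Real.exp_log hpos]
  have hxs : 0 < x - s := by
    rcases lt_or_ge s x with h | h
    · linarith
    · nlinarith
  have hinv : (x + s)⁻¹ = x - s := by
    rw [inv_eq_iff_eq_inv, eq_comm, inv_eq_one_div, div_eq_iff (by nlinarith)]
    nlinarith
  rw [hinv]; ring

/-- Paper's Theorem 1: if the first eigencomponent of the initial CG error is small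
relative to the others, CG convergence in the first `J` iterations is governed by the
reduced condition number `κ₂ = λ_m / λ₂` rather than by `κ₁ = λ_m / λ₁`. Here
`E j = sInf { Σ_{i=1}^m λ_i (γ_i q(λ_i))² : q polynomial, deg q ≤ j, q(0) = 1 }`. -/
theorem cg_small_first_component (m : ℕ) (hm : 2 ≤ m) (lam gam : ℕ → ℝ)
    (hpos : ∀ i, 1 ≤ i → i ≤ m → 0 < lam i)
    (hmono : ∀ i k, 1 ≤ i → i ≤ k → k ≤ m → lam i ≤ lam k)
    (δ : ℝ) (hδ : 0 < δ) (J : ℕ) (hJ : 1 ≤ J)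
    (hsmall : ∀ j, 1 ≤ j → j ≤ J →
      lam 1 * gam 1 ^ 2 ≤
        4 * ((Real.sqrt (lam m / lam 2) - 1) / (Real.sqrt (lam m / lam 2) + 1)) ^ (2 * j) * δ *
          ∑ i ∈ Finset.Icc 2 m, lam i * gam i ^ 2) :
    ∀ j, 1 ≤ j → j ≤ J →
      sInf {y : ℝ | ∃ q : Polynomial ℝ, q.natDegree ≤ j ∧ q.eval 0 = 1 ∧
          y = ∑ i ∈ Finset.Icc 1 m, lam i * (gam i * q.eval (lam i)) ^ 2} ≤
        4 * (1 + δ) *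
          ((Real.sqrt (lam m / lam 2) - 1) / (Real.sqrt (lam m / lam 2) + 1)) ^ (2 * j) *
          ∑ i ∈ Finset.Icc 1 m, lam i * gam i ^ 2 := by
  intro j hj1 hjJ
  have hl1 : 0 < lam 1 := hpos 1 le_rfl (by omega)
  have hl2 : 0 < lam 2 := hpos 2 (by norm_num) hm
  have hlm : 0 < lam m := hpos m (by omega) le_rfl
  have h12 : lam 1 ≤ lam 2 := hmono 1 2 le_rfl (by norm_num) hm
  have h2lem : lam 2 ≤ lam m := hmono 2 m (by norm_num) hm le_rfl
  set C : ℝ := (Real.sqrt (lam m / lam 2) - 1) / (Real.sqrt (lam m / lam 2) + 1) with hCdef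
  clear_value C
  set S2 : ℝ := ∑ i ∈ Finset.Icc 2 m, lam i * gam i ^ 2 with hS2def
  clear_value S2
  set S1 : ℝ := ∑ i ∈ Finset.Icc 1 m, lam i * gam i ^ 2 with hS1def
  clear_value S1
  have hbdd : BddBelow {y : ℝ | ∃ q : Polynomial ℝ, q.natDegree ≤ j ∧ q.eval 0 = 1 ∧
      y = ∑ i ∈ Finset.Icc 1 m, lam i * (gam i * q.eval (lam i)) ^ 2} := by
    refine ⟨0, fun y hy => ?_⟩
    obtain ⟨q, _, _, rfl⟩ := hy
    refine Finset.sum_nonneg fun i hi => ?_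
    rw [Finset.mem_Icc] at hi
    have := hpos i hi.1 hi.2
    positivity
  have hsplit : Finset.Icc 1 m = insert 1 (Finset.Icc 2 m) := by
    ext x; simp only [Finset.mem_Icc, Finset.mem_insert]; omega
  have h1nmem : (1 : ℕ) ∉ Finset.Icc 2 m := by simp
  have hS1S2 : S1 = lam 1 * gam 1 ^ 2 + S2 := by
    rw [hS1def, hS2def, hsplit, Finset.sum_insert h1nmem]
  have hS2nn : 0 ≤ S2 := by
    rw [hS2def]
    refine Finset.sum_nonneg fun i hi => ?_
    rw [Finset.mem_Icc] at hi
    have := hpos i (by omega) hi.2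
    positivity
  have hsm := hsmall j hj1 hjJ
  rcases eq_or_lt_of_le h2lem with heq | hlt
  · -- degenerate case lam 2 = lam m
    have hC0 : C = 0 := by
      rw [hCdef, ← heq, div_self (ne_of_gt hl2), Real.sqrt_one]
      norm_num
    have hCz : C ^ (2 * j) = 0 := by
      rw [hC0]; exact zero_pow (by omega)
    rw [hCz] at hsm ⊢
    have hg1 : gam 1 = 0 := by
      have h1 : gam 1 ^ 2 = 0 := by nlinarith [sq_nonneg (gam 1)]
      exact pow_eq_zero_iff (by norm_num) |>.mp h1
    set q : Polynomial ℝ := Polynomial.C 1 - Polynomial.C (lam 2)⁻¹ * Polynomial.X with hq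
    clear_value q
    have hmem : (0 : ℝ) ∈ {y : ℝ | ∃ q : Polynomial ℝ, q.natDegree ≤ j ∧ q.eval 0 = 1 ∧
        y = ∑ i ∈ Finset.Icc 1 m, lam i * (gam i * q.eval (lam i)) ^ 2} := by
      refine ⟨q, ?_, ?_, ?_⟩
      · have : q.natDegree ≤ 1 := by rw [hq]; compute_degree
        omega
      · simp [hq]
      · rw [hsplit, Finset.sum_insert h1nmem, hg1]
        rw [eq_comm]
        simp only [mul_zero, zero_mul, zero_pow, ne_eq, OfNat.ofNat_ne_zero,
          not_false_eq_true, zero_add]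
        norm_num
        refine (Finset.sum_eq_zero fun i hi => ?_)
        rw [Finset.mem_Icc] at hi
        have hle : lam 2 ≤ lam i := hmono 2 i (by norm_num) hi.1 hi.2
        have hge : lam i ≤ lam m := hmono i m (by omega) hi.2 le_rfl
        have hli : lam i = lam 2 := le_antisymm (heq ▸ hge) hle
        have : q.eval (lam i) = 0 := by
          simp [hq, hli, inv_mul_cancel₀ (ne_of_gt hl2)]
        rw [this]
        ring
    calc sInf _ ≤ 0 := csInf_le hbdd hmem
      _ = 4 * (1 + δ) * 0 * S1 := by ring
  · -- main case lam 2 < lam m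
    have hden : 0 < lam m - lam 2 := by linarith
    have hκ : 1 < lam m / lam 2 := (one_lt_div hl2).mpr hlt
    set s : ℝ := Real.sqrt (lam m / lam 2) with hsdef
    clear_value s
    have hs1 : 1 < s := by
      rw [hsdef, show (1:ℝ) = Real.sqrt 1 from (Real.sqrt_one).symm]
      exact Real.sqrt_lt_sqrt (by norm_num) hκ
    have hssq : s ^ 2 = lam m / lam 2 := by
      rw [hsdef]; exact Real.sq_sqrt (by linarith)
    have hba : s ^ 2 * lam 2 = lam m := by
      rw [hssq]; field_simp
    have hCs : C = (s - 1) / (s + 1) := by rw [hCdef, hsdef]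
    have hC0 : 0 < C := by
      rw [hCs]; exact div_pos (by linarith) (by linarith)
    have hC1 : C < 1 := by
      rw [hCs, div_lt_one (by linarith)]; linarith
    set u : ℝ := (s + 1) / (s - 1) with hudef
    clear_value u
    have hu1 : 1 < u := by
      rw [hudef, lt_div_iff₀ (by linarith)]; linarith
    have hCu : C = u⁻¹ := by
      rw [hCs, hudef, inv_div]
    set R : ℝ := Real.log u with hRdef
    clear_value R
    have hR0 : 0 < R := by rw [hRdef]; exact Real.log_pos hu1
    set t0 : ℝ := (lam m + lam 2) / (lam m - lam 2) with ht0def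
    clear_value t0
    have hcoshR : Real.cosh R = t0 := by
      rw [hRdef, Real.cosh_eq, Real.exp_neg, Real.exp_log (by linarith)]
      rw [ht0def, hudef]
      have hs1' : s - 1 ≠ 0 := by linarith
      have hs1'' : s + 1 ≠ 0 := by linarith
      field_simp
      linear_combination (-4) * hba
    set L : Polynomial ℝ := Polynomial.C t0 - Polynomial.C (2 / (lam m - lam 2)) * Polynomial.X
      with hLdef
    clear_value L
    have hLeval : ∀ x : ℝ, L.eval x = (lam m + lam 2 - 2 * x) / (lam m - lam 2) := by
      intro x
      simp only [hLdef, Polynomial.eval_sub, Polynomial.eval_mul, Polynomial.eval_C,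
        Polynomial.eval_X, ht0def]
      field_simp
    have hLdeg : L.natDegree ≤ 1 := by rw [hLdef]; compute_degree
    set p : Polynomial ℝ := (Polynomial.Chebyshev.T ℝ (j : ℤ)).comp L with hpdef
    clear_value p
    have hpdeg : p.natDegree ≤ j := by
      rw [hpdef]
      refine le_trans (Polynomial.natDegree_comp_le) ?_
      have := chebyT_natDegree_le j
      calc (Polynomial.Chebyshev.T ℝ (j : ℤ)).natDegree * L.natDegree
          ≤ j * 1 := Nat.mul_le_mul this hLdeg
        _ = j := by omega
    set d : ℝ := Real.cosh (j * R) with hddef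
    clear_value d
    have hd1 : 1 ≤ d := by rw [hddef]; exact Real.one_le_cosh _
    have hd0 : 0 < d := by linarith
    have hp0 : p.eval 0 = d := by
      rw [hpdef, Polynomial.eval_comp]
      have : L.eval 0 = t0 := by rw [hLeval, ht0def]; norm_num
      rw [this, ← hcoshR, chebyT_cosh, hddef]
    -- key quantitative bound : 1/2 ≤ C^j * d
    have hCd : 1 / 2 ≤ C ^ j * d := by
      have hexp : Real.exp R = u := by rw [hRdef]; exact Real.exp_log (by linarith)
      have h1 : Real.exp ((j : ℝ) * R) = u ^ j := by
        rw [Real.exp_nat_mul, hexp]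
      have h2 : Real.exp ((j : ℝ) * R) ≤ 2 * d := by
        rw [hddef, Real.cosh_eq]
        have := Real.exp_pos (-((j : ℝ) * R))
        linarith
      have hCj : C ^ j = (u ^ j)⁻¹ := by rw [hCu, inv_pow]
      have hu0 : (0:ℝ) < u ^ j := by positivity
      have h3 : u ^ j ≤ 2 * d := by rw [← h1]; exact h2
      rw [hCj, inv_mul_eq_div, le_div_iff₀ hu0]
      linarith only [h3]
    have hCj0 : 0 < C ^ j := by positivity
    have hdi : d⁻¹ ≤ 2 * C ^ j := by
      have hone : 1 ≤ 2 * C ^ j * d := by linarith only [hCd]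
      calc d⁻¹ = d⁻¹ * 1 := by ring
        _ ≤ d⁻¹ * (2 * C ^ j * d) :=
            mul_le_mul_of_nonneg_left hone (le_of_lt (inv_pos.mpr hd0))
        _ = 2 * C ^ j * (d⁻¹ * d) := by ring
        _ = 2 * C ^ j := by rw [inv_mul_cancel₀ (ne_of_gt hd0)]; ring
    have hd2 : d⁻¹ ^ 2 ≤ 4 * C ^ (2 * j) := by
      have hCsq : C ^ (2 * j) = (C ^ j) ^ 2 := by
        rw [← pow_mul, Nat.mul_comm]
      rw [hCsq]
      calc d⁻¹ ^ 2 ≤ (2 * C ^ j) ^ 2 :=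
            pow_le_pow_left₀ (le_of_lt (inv_pos.mpr hd0)) hdi 2
        _ = 4 * (C ^ j) ^ 2 := by ring
    set q : Polynomial ℝ := Polynomial.C d⁻¹ * p with hqdef
    clear_value q
    have hqdeg : q.natDegree ≤ j := by
      rw [hqdef]
      refine le_trans (Polynomial.natDegree_mul_le) ?_
      simp [hpdeg]
    have hq0 : q.eval 0 = 1 := by
      rw [hqdef]
      simp [hp0, inv_mul_cancel₀ (ne_of_gt hd0)]
    -- the bound on q at lam 1
    have hq1 : (q.eval (lam 1)) ^ 2 ≤ 1 := by
      have hv1 : 1 ≤ L.eval (lam 1) := by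
        rw [hLeval, le_div_iff₀ hden]; linarith only [h12, hden]
      have hvt0 : L.eval (lam 1) ≤ t0 := by
        rw [hLeval, ht0def, div_le_div_iff₀ hden hden]; nlinarith only [hl1, hden]
      obtain ⟨r, hr0, hrcosh⟩ := exists_cosh_eq _ hv1
      have hrR : r ≤ R := by
        have : Real.cosh r ≤ Real.cosh R := by rw [hrcosh, hcoshR]; exact hvt0
        have := Real.cosh_le_cosh.mp this
        rwa [abs_of_nonneg hr0, abs_of_nonneg (le_of_lt hR0)] at this
      have hpeval : p.eval (lam 1) = Real.cosh (j * r) := by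
        rw [hpdef, Polynomial.eval_comp, ← hrcosh, chebyT_cosh]
      have hcle : Real.cosh ((j:ℝ) * r) ≤ d := by
        rw [hddef]
        apply Real.cosh_le_cosh.mpr
        rw [abs_of_nonneg (by positivity), abs_of_nonneg (by positivity)]
        exact mul_le_mul_of_nonneg_left hrR (by positivity)
      have hcge : 1 ≤ Real.cosh ((j:ℝ) * r) := Real.one_le_cosh _
      have heq1 : q.eval (lam 1) = d⁻¹ * Real.cosh ((j:ℝ) * r) := by
        rw [hqdef]; simp [hpeval]
      rw [heq1]
      have hid : d⁻¹ * d = 1 := inv_mul_cancel₀ (ne_of_gt hd0)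
      have hipos : 0 < d⁻¹ := by positivity
      have hub : d⁻¹ * Real.cosh ((j:ℝ) * r) ≤ 1 := by
        calc d⁻¹ * Real.cosh ((j:ℝ) * r) ≤ d⁻¹ * d :=
              mul_le_mul_of_nonneg_left hcle (le_of_lt hipos)
          _ = 1 := hid
      have hlb : 0 ≤ d⁻¹ * Real.cosh ((j:ℝ) * r) := by
        have := Real.cosh_pos ((j:ℝ) * r)
        positivity
      nlinarith only [hub, hlb]
    -- the bound on q on [lam 2, lam m]
    have hq2 : ∀ i, 2 ≤ i → i ≤ m → (q.eval (lam i)) ^ 2 ≤ 4 * C ^ (2 * j) := by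
      intro i h2i him
      have hai : lam 2 ≤ lam i := hmono 2 i (by norm_num) h2i him
      have hib : lam i ≤ lam m := hmono i m (by omega) him le_rfl
      have hv1 : -1 ≤ L.eval (lam i) := by
        rw [hLeval, le_div_iff₀ hden]; linarith only [hib, hden]
      have hv2 : L.eval (lam i) ≤ 1 := by
        rw [hLeval, div_le_one hden]; linarith only [hai]
      have habs : |p.eval (lam i)| ≤ 1 := by
        rw [hpdef, Polynomial.eval_comp]
        exact chebyT_abs_le j _ hv1 hv2
      have hsq : (p.eval (lam i)) ^ 2 ≤ 1 := by
        have h := abs_le.mp habs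
        nlinarith only [h.1, h.2]
      have heq2 : q.eval (lam i) = d⁻¹ * p.eval (lam i) := by rw [hqdef]; simp
      rw [heq2]
      calc (d⁻¹ * p.eval (lam i)) ^ 2 = d⁻¹ ^ 2 * (p.eval (lam i)) ^ 2 := by ring
        _ ≤ d⁻¹ ^ 2 * 1 := mul_le_mul_of_nonneg_left hsq (by positivity)
        _ = d⁻¹ ^ 2 := by ring
        _ ≤ 4 * C ^ (2 * j) := hd2
    -- assemble
    set y : ℝ := ∑ i ∈ Finset.Icc 1 m, lam i * (gam i * q.eval (lam i)) ^ 2 with hydef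
    clear_value y
    have hmem : y ∈ {y : ℝ | ∃ q : Polynomial ℝ, q.natDegree ≤ j ∧ q.eval 0 = 1 ∧
        y = ∑ i ∈ Finset.Icc 1 m, lam i * (gam i * q.eval (lam i)) ^ 2} :=
      ⟨q, hqdeg, hq0, hydef⟩
    have hsum2 : ∑ i ∈ Finset.Icc 2 m, lam i * (gam i * q.eval (lam i)) ^ 2
        ≤ 4 * C ^ (2 * j) * S2 := by
      rw [hS2def, Finset.mul_sum]
      refine Finset.sum_le_sum fun i hi => ?_
      rw [Finset.mem_Icc] at hi
      have hb := hq2 i hi.1 hi.2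
      have hli : 0 < lam i := hpos i (by omega) hi.2
      have hg2 : 0 ≤ gam i ^ 2 := sq_nonneg _
      calc lam i * (gam i * q.eval (lam i)) ^ 2
          = lam i * gam i ^ 2 * (q.eval (lam i)) ^ 2 := by ring
        _ ≤ lam i * gam i ^ 2 * (4 * C ^ (2 * j)) :=
            mul_le_mul_of_nonneg_left hb (by positivity)
        _ = 4 * C ^ (2 * j) * (lam i * gam i ^ 2) := by ring
    have hterm1 : lam 1 * (gam 1 * q.eval (lam 1)) ^ 2 ≤ lam 1 * gam 1 ^ 2 := by
      have : lam 1 * (gam 1 * q.eval (lam 1)) ^ 2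
          = lam 1 * gam 1 ^ 2 * (q.eval (lam 1)) ^ 2 := by ring
      rw [this]
      calc lam 1 * gam 1 ^ 2 * (q.eval (lam 1)) ^ 2
          ≤ lam 1 * gam 1 ^ 2 * 1 := mul_le_mul_of_nonneg_left hq1 (by positivity)
        _ = lam 1 * gam 1 ^ 2 := by ring
    have hy : y ≤ 4 * C ^ (2 * j) * δ * S2 + 4 * C ^ (2 * j) * S2 := by
      rw [hydef, hsplit, Finset.sum_insert h1nmem]
      have h := le_trans hterm1 hsm
      linarith only [h, hsum2]
    have hfinal : 4 * C ^ (2 * j) * δ * S2 + 4 * C ^ (2 * j) * S2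
        ≤ 4 * (1 + δ) * C ^ (2 * j) * S1 := by
      have hC2j : 0 ≤ C ^ (2 * j) := by positivity
      have hX : 0 ≤ lam 1 * gam 1 ^ 2 := mul_nonneg hl1.le (sq_nonneg _)
      have h1 : 0 ≤ 4 * (1 + δ) * C ^ (2 * j) * (lam 1 * gam 1 ^ 2) :=
        mul_nonneg (mul_nonneg (mul_nonneg (by norm_num) (by linarith)) hC2j) hX
      rw [hS1S2]
      linarith only [h1]
    exact le_trans (csInf_le hbdd hmem) (le_trans hy hfinal)
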